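/- Let P : ℝ^d → ℝ^d, x̄ ∈ ℝ^d, δ > 0, C ≥ 0. Suppose P is differentiable on ball(x̄, 2δ) and its derivative x ↦ DP(x) is C-Lipschitz with respect to the operator norm on ball(x̄, 2δ). Fix x ∈ ball(x̄, δ) and x' ∈ ball(x̄, 2δ), and suppose: P x ∈ ball(x̄, 2δ), P(P x) = P x, and the linear map Q := DP(P x) satisfies Q(x − P x) = 0. Then ‖P x' − P x − Q(x' − x)‖ ≤ (C/2)·‖x' − P x‖² ≤ C·(‖x − P x‖² + ‖x − x'‖²). -/

import Mathlib

open Metric Set Filter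
open scoped InnerProductSpace

abbrev Euc (d : ℕ) := EuclideanSpace ℝ (Fin d)

theorem stmt16 {d : ℕ} (P : Euc d → Euc d) (xbar : Euc d) (δ C : ℝ)
    (hδ : 0 < δ) (hC : 0 ≤ C)
    (hdiff : ∀ y ∈ ball xbar (2*δ), DifferentiableAt ℝ P y)
    (hLip : ∀ a ∈ ball xbar (2*δ), ∀ b ∈ ball xbar (2*δ),
      ‖fderiv ℝ P a - fderiv ℝ P b‖ ≤ C * ‖a - b‖)
    (x x' : Euc d) (hx : x ∈ ball xbar δ) (hx' : x' ∈ ball xbar (2*δ))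
    (hPx : P x ∈ ball xbar (2*δ)) (hPP : P (P x) = P x)
    (hQ : fderiv ℝ P (P x) (x - P x) = 0) :
    ‖P x' - P x - fderiv ℝ P (P x) (x' - x)‖ ≤ C/2 * ‖x' - P x‖^2 ∧
    C/2 * ‖x' - P x‖^2 ≤ C * (‖x - P x‖^2 + ‖x - x'‖^2) := by
  have hQdef : True := trivial
  set Q := fderiv ℝ P (P x) with hQd
  set v : Euc d := x' - P x with hv
  set y : ℝ → Euc d := fun t => P x + t • v with hy
  have hyball : ∀ t ∈ Icc (0:ℝ) 1, y t ∈ ball xbar (2*δ) := by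
    intro t ht
    have hmem := convex_ball xbar (2*δ) hPx hx' (by linarith [ht.2] : (0:ℝ) ≤ 1 - t)
      ht.1 (by ring)
    have heq : (1 - t) • P x + t • x' = y t := by simp [hy, hv]; module
    rwa [heq] at hmem
  set g : ℝ → Euc d := fun t => P (y t) - t • (Q v) - P (P x) with hg
  have hgderiv : ∀ t ∈ Icc (0:ℝ) 1,
      HasDerivAt g (fderiv ℝ P (y t) v - Q v) t := by
    intro t ht
    have hyt : HasDerivAt y v t := by
      have h := ((hasDerivAt_id t).smul_const v).const_add (P x)
      simp only [one_smul] at h; exact h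
    have hPy : HasDerivAt (fun t => P (y t)) (fderiv ℝ P (y t) v) t := by
      have := (hdiff (y t) (hyball t ht)).hasFDerivAt.comp_hasDerivAt t hyt
      exact this
    have h := (hPy.sub ((hasDerivAt_id t).smul_const (Q v))).sub_const (P (P x))
    simp only [one_smul] at h; exact h
  have hcont : ContinuousOn g (Icc 0 1) := fun t ht =>
    (hgderiv t ht).continuousAt.continuousWithinAt
  have hderiv : ∀ t ∈ Ico (0:ℝ) 1,
      HasDerivWithinAt g (fderiv ℝ P (y t) v - Q v) (Ici t) t := fun t ht =>
    (hgderiv t (Ico_subset_Icc_self ht)).hasDerivWithinAt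
  have h0 : ‖g 0‖ ≤ C/2 * ‖v‖^2 * 0^2 := by simp [hg, hy]
  have hB : ∀ t : ℝ, HasDerivAt (fun t : ℝ => C/2 * ‖v‖^2 * t^2) (C * ‖v‖^2 * t) t := by
    intro t
    have : HasDerivAt (fun t : ℝ => C/2 * ‖v‖^2 * t^2) (C/2 * ‖v‖^2 * (2*t^1)) t :=
      (hasDerivAt_pow 2 t).const_mul (C/2 * ‖v‖^2)
    convert this using 1; ring
  have hbound : ∀ t ∈ Ico (0:ℝ) 1, ‖fderiv ℝ P (y t) v - Q v‖ ≤ C * ‖v‖^2 * t := by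
    intro t ht
    have h1 : fderiv ℝ P (y t) v - Q v = (fderiv ℝ P (y t) - Q) v := by simp
    rw [h1]
    calc ‖(fderiv ℝ P (y t) - Q) v‖ ≤ ‖fderiv ℝ P (y t) - Q‖ * ‖v‖ :=
          (fderiv ℝ P (y t) - Q).le_opNorm v
      _ ≤ (C * ‖y t - P x‖) * ‖v‖ := by
          have := hLip (y t) (hyball t (Ico_subset_Icc_self ht)) (P x) hPx
          exact mul_le_mul_of_nonneg_right this (norm_nonneg v)
      _ = C * ‖v‖^2 * t := by
          have hns : ‖y t - P x‖ = t * ‖v‖ := by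
            simp [hy, norm_smul, abs_of_nonneg ht.1]
          rw [hns]; ring
  have key : ∀ t ∈ Icc (0:ℝ) 1, ‖g t‖ ≤ C/2 * ‖v‖^2 * t^2 := fun t ht =>
    image_norm_le_of_norm_deriv_right_le_deriv_boundary hcont hderiv h0 hB hbound ht
  have hQv : Q (x' - x) = Q v := by
    have hx'x : x' - x = v - (x - P x) := by rw [hv]; module
    rw [hx'x, map_sub, hQ, sub_zero]
  have h1 : ‖P x' - P x - Q (x' - x)‖ ≤ C/2 * ‖x' - P x‖^2 := by
    have hg1 := key 1 (by norm_num)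
    have hy1 : y 1 = x' := by rw [hy]; simp [hv]
    have hgeq : g 1 = P x' - P x - Q (x' - x) := by
      rw [hg, hQv]; simp only [hy1, hPP, one_smul]; abel
    rw [← hgeq]
    simpa using hg1
  refine ⟨h1, ?_⟩
  have h2 : ‖x' - P x‖ ≤ ‖x - P x‖ + ‖x - x'‖ := by
    calc ‖x' - P x‖ = ‖(x - P x) - (x - x')‖ := by congr 1; module
      _ ≤ ‖x - P x‖ + ‖x - x'‖ := norm_sub_le _ _
  show C / 2 * ‖x' - P x‖ ^ 2 ≤ C * (‖x - P x‖ ^ 2 + ‖x - x'‖ ^ 2)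
  nlinarith [mul_self_le_mul_self (norm_nonneg (x' - P x)) h2,
    mul_nonneg hC (sq_nonneg (‖x - P x‖ - ‖x - x'‖)), sq_nonneg (‖x' - P x‖)]
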